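/- Let N be a binary tree-child phylogenetic network. There is a bijection between the set of cherry reduction sequences of N and the set of linear extensions of the poset T(int N) of internal tree nodes of N ordered by reachability. In particular, the number of cherry reduction sequences of N equals the number of linear extensions of T(int N). -/

import Mathlib

open Set

namespace Phylo

variable {V : Type*}

/-- In-degree of a node in a digraph given by its edge relation. -/
noncomputable def inDeg (N : V → V → Prop) (v : V) : ℕ := {u | N u v}.ncard

/-- Out-degree of a node. -/
noncomputable def outDeg (N : V → V → Prop) (v : V) : ℕ := {w | N v w}.ncard

/-- Reachability: existence of a directed path. -/
def Reach (N : V → V → Prop) : V → V → Prop := Relation.ReflTransGen N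

/-- Leaves: nodes of out-degree 0. -/
def leaves (N : V → V → Prop) : Set V := {v | outDeg N v = 0}

/-- Internal tree nodes, i.e. the set `T(int N)`. -/
def ITN (N : V → V → Prop) : Set V := {v | inDeg N v ≤ 1 ∧ 1 ≤ outDeg N v}

/-- A (rooted) phylogenetic network structure on the digraph `N` with root `ρ`. -/
structure IsPhyloNet (N : V → V → Prop) (ρ : V) : Prop where
  acyclic : ∀ v, ¬ Relation.TransGen N v v
  root_indeg : inDeg N ρ = 0
  root_connects : ∀ v, Reach N ρ v
  retic_out : ∀ v, 2 ≤ inDeg N v → outDeg N v = 1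
  no_elementary : ∀ v, ¬ (inDeg N v = 1 ∧ outDeg N v = 1)

/-- Binarity of a phylogenetic network. -/
structure IsBinary (N : V → V → Prop) (ρ : V) : Prop where
  retic_deg : ∀ v, 2 ≤ inDeg N v → inDeg N v = 2 ∧ outDeg N v = 1
  tree_deg : ∀ v, v ≠ ρ → inDeg N v ≤ 1 → 1 ≤ outDeg N v →
      inDeg N v = 1 ∧ outDeg N v = 2
  root_deg : outDeg N ρ = 2 ∨ outDeg N ρ = 0

/-- Tree-child: every internal node has a child of tree type (in-degree ≤ 1). -/
def IsTreeChild (N : V → V → Prop) : Prop :=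
  ∀ v, 1 ≤ outDeg N v → ∃ w, N v w ∧ inDeg N w ≤ 1

/-- `u` is the tree-node root of a cherry. -/
def IsCherryRoot (N : V → V → Prop) (u : V) : Prop :=
  inDeg N u ≤ 1 ∧ ∃ x y, x ≠ y ∧ N u x ∧ N u y ∧ outDeg N x = 0 ∧ outDeg N y = 0 ∧
    ∀ w, N u w → w = x ∨ w = y

/-- `u` is the tree-node root of a reticulated cherry. -/
def IsRetCherryRoot (N : V → V → Prop) (u : V) : Prop :=
  inDeg N u ≤ 1 ∧ ∃ h y, h ≠ y ∧ N u h ∧ N u y ∧ 2 ≤ inDeg N h ∧ outDeg N y = 0 ∧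
    (∃ x, N h x ∧ outDeg N x = 0 ∧ ∀ w, N h w → w = x) ∧
    ∀ w, N u w → w = h ∨ w = y

/-- Terminal node: root of a cherry or of a reticulated cherry. -/
def IsTerminal (N : V → V → Prop) (u : V) : Prop :=
  IsCherryRoot N u ∨ IsRetCherryRoot N u

/-- Cherry reduction rooted at `u`: remove all descendant edges of `u`
(and hence all strict descendant tree nodes of `u` become isolated/removed). -/
def CR (N : V → V → Prop) (u : V) : V → V → Prop :=
  fun a b => N a b ∧ ¬ Reach N u a

/-- `IsCRSeq N L` : `L` is the list of reduced nodes of a full cherry reduction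
sequence of `N`, ending in a single-node network (no edges left). -/
def IsCRSeq : (V → V → Prop) → List V → Prop
  | N, [] => ∀ a b, ¬ N a b
  | N, u :: us => IsTerminal N u ∧ IsCRSeq (CR N u) us

/-- Orchard networks: those admitting a full cherry reduction sequence. -/
def IsOrchard (N : V → V → Prop) : Prop := ∃ L, IsCRSeq N L

/-- Underlying undirected graph of a digraph. -/
def underlying (N : V → V → Prop) : SimpleGraph V := SimpleGraph.fromRel N

/-- Cover relation of the reachability poset on internal tree nodes. -/
def Covers (N : V → V → Prop) (u v : V) : Prop :=
  u ∈ ITN N ∧ v ∈ ITN N ∧ u ≠ v ∧ Reach N u v ∧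
    ¬ ∃ z ∈ ITN N, z ≠ u ∧ z ≠ v ∧ Reach N u z ∧ Reach N z v

/-- Biconnected set of nodes of an undirected graph. -/
def IsBiconn (G : SimpleGraph V) (B : Set V) : Prop :=
  B.Nonempty ∧ (G.induce B).Preconnected ∧ ∀ v ∈ B, (G.induce (B \ {v})).Preconnected

/-- Blob: maximal biconnected component. -/
def IsBlob (G : SimpleGraph V) (B : Set V) : Prop :=
  IsBiconn G B ∧ ∀ B', IsBiconn G B' → B ⊆ B' → B' = B

/-- Level of a network: maximum number of reticulations in a blob. -/
noncomputable def level (N : V → V → Prop) : ℕ :=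
  sSup {k | ∃ B, IsBlob (underlying N) B ∧ k = (B ∩ {v | 2 ≤ inDeg N v}).ncard}

/-- `H` is a minor of `G`, presented by branch sets. -/
def IsMinorOf {α β : Type*} (H : SimpleGraph β) (G : SimpleGraph α) : Prop :=
  ∃ f : β → Set α,
    (∀ b, (f b).Nonempty) ∧
    (∀ b, (G.induce (f b)).Preconnected) ∧
    (∀ b b', b ≠ b' → Disjoint (f b) (f b')) ∧
    (∀ b b', H.Adj b b' → ∃ x ∈ f b, ∃ y ∈ f b', G.Adj x y)

/-- A list is a linear extension of the reachability poset on `T(int N)`. -/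
def IsLinExtList (N : V → V → Prop) (L : List V) : Prop :=
  L.Nodup ∧ (∀ v, v ∈ L ↔ v ∈ ITN N) ∧
  ∀ (i j : ℕ) (hi : i < L.length) (hj : j < L.length),
    Reach N (L.get ⟨i, hi⟩) (L.get ⟨j, hj⟩) → i ≤ j

/-- A list is a linear extension of the order-dual of the reachability poset. -/
def IsDualLinExtList (N : V → V → Prop) (L : List V) : Prop :=
  L.Nodup ∧ (∀ v, v ∈ L ↔ v ∈ ITN N) ∧
  ∀ (i j : ℕ) (hi : i < L.length) (hj : j < L.length),
    Reach N (L.get ⟨j, hj⟩) (L.get ⟨i, hi⟩) → i ≤ j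

end Phylo

namespace Phylo

variable {V : Type*} [Fintype V] {M : V → V → Prop} {u v a b : V}

lemma outDeg_eq_zero' (h : ∀ w, ¬ M v w) : outDeg M v = 0 := by
  have : {w | M v w} = ∅ := by ext w; simp [h w]
  simp [outDeg, this]

lemma not_edge_of_outDeg_eq_zero (h : outDeg M v = 0) (w : V) : ¬ M v w := by
  intro hw
  have h2 := (Set.ncard_eq_zero (Set.toFinite _)).mp h
  rw [Set.eq_empty_iff_forall_notMem] at h2
  exact h2 w hw

lemma one_le_outDeg (hw : M v u) : 1 ≤ outDeg M v := by
  rw [Nat.one_le_iff_ne_zero]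
  intro h0
  exact not_edge_of_outDeg_eq_zero h0 u hw

lemma one_le_inDeg (hw : M u v) : 1 ≤ inDeg M v := by
  exact (Set.ncard_pos (Set.toFinite _)).mpr ⟨u, hw⟩

lemma exists_child (h : 1 ≤ outDeg M v) : ∃ w, M v w :=
  (Set.ncard_pos (Set.toFinite _)).mp h

lemma exists_parent (h : 1 ≤ inDeg M v) : ∃ s, M s v :=
  (Set.ncard_pos (Set.toFinite _)).mp h

lemma inDeg_CR_le : inDeg (CR M u) v ≤ inDeg M v :=
  Set.ncard_le_ncard (fun s hs => hs.1) (Set.toFinite _)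

lemma outDeg_CR_of_reach (h : Reach M u v) : outDeg (CR M u) v = 0 :=
  outDeg_eq_zero' fun _ hw => hw.2 h

lemma outDeg_CR_of_not_reach (h : ¬ Reach M u v) : outDeg (CR M u) v = outDeg M v := by
  have : {w | CR M u v w} = {w | M v w} := by ext w; simp [CR, h]
  unfold outDeg
  rw [this]

lemma inDeg_CR_of_not_reach (h : ¬ Reach M u v) : inDeg (CR M u) v = inDeg M v := by
  have : {s | CR M u s v} = {s | M s v} := by
    ext s
    simp only [CR, Set.mem_setOf_eq, and_iff_left_iff_imp]
    intro hsv hus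
    exact h (Relation.ReflTransGen.tail hus hsv)
  unfold inDeg
  rw [this]

lemma desc_of_terminal (ht : IsTerminal M u) (hv : Reach M u v) :
    v = u ∨ outDeg M v = 0 ∨ 2 ≤ inDeg M v := by
  have hv' : Relation.ReflTransGen M u v := hv
  clear hv
  rcases ht with ⟨_, x, y, hxy, hux, huy, hx, hy, hall⟩ |
      ⟨_, h, y, hhy, huh, huy, hh, hy, ⟨x, hhx, hxo, hallh⟩, hall⟩
  · have claim : v = u ∨ outDeg M v = 0 := by
      induction hv' with
      | refl => exact Or.inl rfl
      | tail hbc hcv ih =>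
        rcases ih with rfl | h0
        · rcases hall _ hcv with rfl | rfl
          · exact Or.inr hx
          · exact Or.inr hy
        · exact absurd hcv (not_edge_of_outDeg_eq_zero h0 _)
    tauto
  · have claim : v = u ∨ v = h ∨ outDeg M v = 0 := by
      induction hv' with
      | refl => exact Or.inl rfl
      | tail hbc hcv ih =>
        rcases ih with rfl | rfl | h0
        · rcases hall _ hcv with rfl | rfl
          · exact Or.inr (Or.inl rfl)
          · exact Or.inr (Or.inr hy)
        · rw [hallh _ hcv]; exact Or.inr (Or.inr hxo)
        · exact absurd hcv (not_edge_of_outDeg_eq_zero h0 _)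
    rcases claim with rfl | rfl | h0
    · exact Or.inl rfl
    · exact Or.inr (Or.inr hh)
    · exact Or.inr (Or.inl h0)

lemma terminal_reach_itn (ht : IsTerminal M u) (hv : Reach M u v) (hitn : v ∈ ITN M) :
    v = u := by
  rcases desc_of_terminal ht hv with rfl | h0 | h2
  · rfl
  · have := hitn.2; omega
  · have := hitn.1; omega

lemma terminal_mem_itn (ht : IsTerminal M u) : u ∈ ITN M := by
  rcases ht with ⟨hin, x, y, _, hux, _⟩ | ⟨hin, h, y, _, huh, _⟩
  · exact ⟨hin, one_le_outDeg hux⟩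
  · exact ⟨hin, one_le_outDeg huh⟩

lemma itn_CR (ht : IsTerminal M u) : ITN (CR M u) = ITN M \ {u} := by
  ext v
  constructor
  · rintro ⟨h1, h2⟩
    obtain ⟨w, hw⟩ := exists_child h2
    have hnr : ¬ Reach M u v := hw.2
    have hne : v ≠ u := fun e => hnr (e ▸ Relation.ReflTransGen.refl)
    rw [inDeg_CR_of_not_reach hnr] at h1
    rw [outDeg_CR_of_not_reach hnr] at h2
    exact ⟨⟨h1, h2⟩, hne⟩
  · rintro ⟨hv, hne⟩
    have hne' : v ≠ u := hne
    have hnr : ¬ Reach M u v := fun hr => hne' (terminal_reach_itn ht hr hv)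
    exact ⟨inDeg_CR_of_not_reach hnr ▸ hv.1, outDeg_CR_of_not_reach hnr ▸ hv.2⟩

lemma reach_CR_of_not_reach (hb : ¬ Reach M u b) (hab : Reach M a b) :
    Reach (CR M u) a b := by
  have hab' : Relation.ReflTransGen M a b := hab
  clear hab
  induction hab' using Relation.ReflTransGen.head_induction_on with
  | refl => exact Relation.ReflTransGen.refl
  | head hac hcb ih =>
    refine Relation.ReflTransGen.head ⟨hac, fun hua => ?_⟩ ih
    exact hb (hua.trans (Relation.ReflTransGen.head hac hcb))

lemma reach_CR_mono (h : Reach (CR M u) a b) : Reach M a b :=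
  Relation.ReflTransGen.mono (r := CR M u) (p := M) (by intro x y h; exact h.1) a b h

structure Good (M : V → V → Prop) : Prop where
  acyc : ∀ v, ¬ Relation.TransGen M v v
  itn_out : ∀ v ∈ ITN M, outDeg M v = 2
  ret_out : ∀ v, 2 ≤ inDeg M v → outDeg M v ≤ 1
  tc : IsTreeChild M

lemma good_CR (hg : Good M) (ht : IsTerminal M u) : Good (CR M u) where
  acyc v hv := hg.acyc v (Relation.TransGen.mono (r := CR M u) (p := M) (by intro x y h; exact h.1) v v hv)
  itn_out v hv := by
    rw [itn_CR ht] at hv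
    have hne : v ≠ u := hv.2
    have hnr : ¬ Reach M u v := fun hr => hne (terminal_reach_itn ht hr hv.1)
    rw [outDeg_CR_of_not_reach hnr]
    exact hg.itn_out v hv.1
  ret_out v h2 := by
    by_cases hr : Reach M u v
    · rw [outDeg_CR_of_reach hr]; omega
    · rw [outDeg_CR_of_not_reach hr]
      exact hg.ret_out v (h2.trans inDeg_CR_le)
  tc v h1 := by
    by_cases hr : Reach M u v
    · rw [outDeg_CR_of_reach hr] at h1; omega
    · rw [outDeg_CR_of_not_reach hr] at h1
      obtain ⟨w, hw, hwin⟩ := hg.tc v h1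
      exact ⟨w, ⟨hw, hr⟩, inDeg_CR_le.trans hwin⟩

lemma min_terminal_aux (hg : Good M) (hu : u ∈ ITN M)
    (hmin : ∀ v ∈ ITN M, Reach M u v → v = u)
    (hab : a ≠ b) (hch : {w | M u w} = {a, b}) (ha : outDeg M a = 0) :
    IsTerminal M u := by
  have hclass : ∀ c, Reach M u c → c ≠ u → inDeg M c ≤ 1 → outDeg M c = 0 := by
    intro c hr hne hin
    by_contra h0
    exact hne (hmin c ⟨hin, Nat.one_le_iff_ne_zero.mpr h0⟩ hr)
  have hmemch : ∀ w, M u w ↔ w ∈ ({a, b} : Set V) := by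
    intro w
    rw [← hch]; rfl
  have hua : M u a := (hmemch a).mpr (Or.inl rfl)
  have hub : M u b := (hmemch b).mpr (Or.inr rfl)
  have hne_self : ∀ c, M u c → c ≠ u := by
    rintro c hc rfl
    exact hg.acyc c (Relation.TransGen.single hc)
  by_cases hb0 : outDeg M b = 0
  · exact Or.inl ⟨hu.1, a, b, hab, hua, hub, ha, hb0, fun w hw => (hmemch w).mp hw⟩
  · have hbin2 : 2 ≤ inDeg M b := by
      by_contra hlt
      exact hb0 (hclass b (Relation.ReflTransGen.single hub) (hne_self b hub) (by omega))
    have hb1 : outDeg M b = 1 := by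
      have := hg.ret_out b hbin2
      omega
    have hb1' : {w | M b w}.ncard = 1 := hb1
    obtain ⟨x, hx⟩ := Set.ncard_eq_one.mp hb1'
    have hmemx : ∀ w, M b w ↔ w = x := by
      intro w
      rw [show M b w ↔ w ∈ {w | M b w} from Iff.rfl, hx, Set.mem_singleton_iff]
    have hbx : M b x := (hmemx x).mpr rfl
    obtain ⟨w, hw, hwin⟩ := hg.tc b (by omega)
    have hwin' : inDeg M x ≤ 1 := (hmemx w).mp hw ▸ hwin
    have hrx : Reach M u x := Relation.ReflTransGen.tail (Relation.ReflTransGen.single hub) hbx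
    have hxu : x ≠ u := by
      rintro rfl
      exact hg.acyc x (Relation.TransGen.head hub (Relation.TransGen.single hbx))
    have hxo : outDeg M x = 0 := hclass x hrx hxu hwin'
    refine Or.inr ⟨hu.1, b, a, hab.symm, hub, hua, hbin2, ha, ⟨x, hbx, hxo, fun w hw => (hmemx w).mp hw⟩, ?_⟩
    intro w hw
    rcases (hmemch w).mp hw with rfl | rfl
    · exact Or.inr rfl
    · exact Or.inl rfl

lemma min_terminal (hg : Good M) (hu : u ∈ ITN M)
    (hmin : ∀ v ∈ ITN M, Reach M u v → v = u) : IsTerminal M u := by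
  have h2 : outDeg M u = 2 := hg.itn_out u hu
  obtain ⟨c1, c2, hne, hch⟩ := Set.ncard_eq_two.mp h2
  obtain ⟨w, hw, hwin⟩ := hg.tc u hu.2
  have hwne : w ≠ u := by
    rintro rfl
    exact hg.acyc w (Relation.TransGen.single hw)
  have hw0 : outDeg M w = 0 := by
    by_contra h0
    exact hwne (hmin w ⟨hwin, Nat.one_le_iff_ne_zero.mpr h0⟩ (Relation.ReflTransGen.single hw))
  have hwmem : w ∈ ({c1, c2} : Set V) := hch ▸ hw
  rcases hwmem with rfl | rfl
  · exact min_terminal_aux hg hu hmin hne hch hw0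
  · exact min_terminal_aux hg hu hmin hne.symm (by rw [hch]; exact Set.pair_comm c1 w) hw0

lemma exists_itn (hg : Good M) (ha : 1 ≤ outDeg M a) : ∃ v, v ∈ ITN M := by
  have : IsIrrefl V (Relation.TransGen M) := ⟨hg.acyc⟩
  have wf : WellFounded (Relation.TransGen M) :=
    Finite.wellFounded_of_trans_of_irrefl _
  refine WellFounded.induction wf
    (C := fun a => 1 ≤ outDeg M a → ∃ v, v ∈ ITN M) a ?_ ha
  intro x ih hx
  by_cases hin : inDeg M x ≤ 1
  · exact ⟨x, hin, hx⟩
  · obtain ⟨p, hp⟩ := exists_parent (show 1 ≤ inDeg M x by omega)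
    exact ih p (Relation.TransGen.single hp) (one_le_outDeg hp)

lemma crseq_dual : ∀ (M : V → V → Prop) (L : List V), IsCRSeq M L → IsDualLinExtList M L := by
  intro M L
  induction L generalizing M with
  | nil =>
    intro h
    refine ⟨List.nodup_nil, fun v => ?_, fun i j hi hj _ => by simp at hi⟩
    simp only [List.not_mem_nil, false_iff]
    rintro ⟨_, hout⟩
    obtain ⟨w, hw⟩ := exists_child hout
    exact h _ _ hw
  | cons u us ih =>
    rintro ⟨ht, hseq⟩
    obtain ⟨hnd, hmem, hord⟩ := ih _ hseq
    have hitn := itn_CR ht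
    have hmem' : ∀ v, v ∈ us ↔ v ∈ ITN M ∧ v ≠ u := by
      intro v
      rw [hmem v, hitn]
      exact Iff.rfl
    refine ⟨List.nodup_cons.mpr ⟨fun h => ((hmem' u).mp h).2 rfl, hnd⟩, ?_, ?_⟩
    · intro v
      rw [List.mem_cons, hmem' v]
      constructor
      · rintro (rfl | ⟨h, _⟩)
        exacts [terminal_mem_itn ht, h]
      · intro hv
        by_cases h : v = u
        exacts [Or.inl h, Or.inr ⟨hv, h⟩]
    · intro i j hi hj hreach
      match i, j with
      | 0, j => exact Nat.zero_le j
      | i+1, 0 =>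
        exfalso
        have h1 : (u::us).get ⟨0, hj⟩ = u := rfl
        have h2 : (u::us).get ⟨i+1, hi⟩ = us.get ⟨i, by simpa using hi⟩ := rfl
        rw [h1, h2] at hreach
        have hm := (hmem' _).mp (us.get_mem ⟨i, by simpa using hi⟩)
        exact hm.2 (terminal_reach_itn ht hreach hm.1)
      | i+1, j+1 =>
        have h1 : (u::us).get ⟨j+1, hj⟩ = us.get ⟨j, by simpa using hj⟩ := rfl
        have h2 : (u::us).get ⟨i+1, hi⟩ = us.get ⟨i, by simpa using hi⟩ := rfl
        rw [h1, h2] at hreach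
        have hm := (hmem' _).mp (us.get_mem ⟨i, by simpa using hi⟩)
        have hnr : ¬ Reach M u (us.get ⟨i, by simpa using hi⟩) :=
          fun hr => hm.2 (terminal_reach_itn ht hr hm.1)
        have := hord i j (by simpa using hi) (by simpa using hj)
          (reach_CR_of_not_reach hnr hreach)
        omega

lemma dual_crseq : ∀ (M : V → V → Prop) (L : List V),
    Good M → IsDualLinExtList M L → IsCRSeq M L := by
  intro M L
  induction L generalizing M with
  | nil =>
    rintro hg ⟨_, hmem, _⟩ a b hab
    obtain ⟨v, hv⟩ := exists_itn hg (one_le_outDeg hab)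
    simpa using (hmem v).mpr hv
  | cons u us ih =>
    rintro hg ⟨hnd, hmem, hord⟩
    have hu : u ∈ ITN M := (hmem u).mp (List.mem_cons_self (a := u) (l := us))
    have hmin : ∀ v ∈ ITN M, Reach M u v → v = u := by
      intro v hv hr
      obtain ⟨⟨i, hi⟩, hgi⟩ := List.mem_iff_get.mp ((hmem v).mpr hv)
      have h0 : (u::us).get ⟨0, Nat.succ_pos _⟩ = u := rfl
      have := hord i 0 hi (Nat.succ_pos _) (by rw [h0, hgi]; exact hr)
      interval_cases i
      exact hgi.symm
    have ht : IsTerminal M u := min_terminal hg hu hmin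
    have hnus : u ∉ us := (List.nodup_cons.mp hnd).1
    refine ⟨ht, ih _ (good_CR hg ht) ⟨(List.nodup_cons.mp hnd).2, ?_, ?_⟩⟩
    · intro v
      rw [itn_CR ht]
      constructor
      · intro hv
        refine ⟨(hmem v).mp (List.mem_cons_of_mem u hv), ?_⟩
        rintro rfl
        exact hnus hv
      · rintro ⟨hv, hne⟩
        have hne' : v ≠ u := hne
        rcases List.mem_cons.mp ((hmem v).mpr hv) with rfl | h
        · exact absurd rfl hne'
        · exact h
    · intro i j hi hj hr
      have h1 : (u::us).get ⟨j+1, by simpa using Nat.succ_lt_succ hj⟩ = us.get ⟨j, hj⟩ := rfl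
      have h2 : (u::us).get ⟨i+1, by simpa using Nat.succ_lt_succ hi⟩ = us.get ⟨i, hi⟩ := rfl
      have := hord (i+1) (j+1) (by simpa using Nat.succ_lt_succ hi)
        (by simpa using Nat.succ_lt_succ hj) (by rw [h1, h2]; exact reach_CR_mono hr)
      omega

lemma dual_rev {N : V → V → Prop} {L : List V} (h : IsDualLinExtList N L) :
    IsLinExtList N L.reverse := by
  obtain ⟨hnd, hmem, hord⟩ := h
  refine ⟨List.nodup_reverse.mpr hnd, fun v => (List.mem_reverse).trans (hmem v), ?_⟩
  intro i j hi hj hr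
  have hi' : i < L.length := by simpa using hi
  have hj' : j < L.length := by simpa using hj
  rw [List.get_reverse' L ⟨i, hi⟩ (by simp; omega),
      List.get_reverse' L ⟨j, hj⟩ (by simp; omega)] at hr
  have := hord (L.length - 1 - j) (L.length - 1 - i) (by omega) (by omega) hr
  omega

lemma lin_rev {N : V → V → Prop} {L : List V} (h : IsLinExtList N L) :
    IsDualLinExtList N L.reverse := by
  obtain ⟨hnd, hmem, hord⟩ := h
  refine ⟨List.nodup_reverse.mpr hnd, fun v => (List.mem_reverse).trans (hmem v), ?_⟩
  intro i j hi hj hr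
  have hi' : i < L.length := by simpa using hi
  have hj' : j < L.length := by simpa using hj
  rw [List.get_reverse' L ⟨i, hi⟩ (by simp; omega),
      List.get_reverse' L ⟨j, hj⟩ (by simp; omega)] at hr
  have := hord (L.length - 1 - j) (L.length - 1 - i) (by omega) (by omega) hr
  omega

end Phylo


open Phylo

/-- for a binary tree-child network there is a bijection between
cherry reduction sequences and linear extensions of `T(int N)`; in particular
the two sets have the same cardinality. -/
theorem stmt5 {V : Type*} [Fintype V] (N : V → V → Prop) (ρ : V)
    (hphy : IsPhyloNet N ρ) (hbin : IsBinary N ρ) (htc : IsTreeChild N) :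
    Nonempty ({L : List V // IsCRSeq N L} ≃ {L : List V // IsLinExtList N L}) ∧
    Nat.card {L : List V // IsCRSeq N L} =
      Nat.card {L : List V // IsLinExtList N L} := by
  classical
  have hgood : Phylo.Good N := by
    refine ⟨hphy.acyclic, ?_, fun v h2 => le_of_eq (hphy.retic_out v h2), htc⟩
    intro v hv
    by_cases h : v = ρ
    · subst h
      rcases hbin.root_deg with h2 | h0
      · exact h2
      · have := hv.2; omega
    · exact (hbin.tree_deg v h hv.1 hv.2).2
  have key : ∀ L, IsCRSeq N L ↔ IsLinExtList N L.reverse := by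
    intro L
    constructor
    · exact fun h => Phylo.dual_rev (Phylo.crseq_dual N L h)
    · intro h
      refine Phylo.dual_crseq N L hgood ?_
      have := Phylo.lin_rev h
      rwa [List.reverse_reverse] at this
  have e : {L : List V // IsCRSeq N L} ≃ {L : List V // IsLinExtList N L} :=
    { toFun := fun L => ⟨L.1.reverse, (key L.1).mp L.2⟩
      invFun := fun L => ⟨L.1.reverse, (key L.1.reverse).mpr
        (by rw [List.reverse_reverse]; exact L.2)⟩
      left_inv := fun L => Subtype.ext (List.reverse_reverse _)
      right_inv := fun L => Subtype.ext (List.reverse_reverse _) }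
  exact ⟨⟨e⟩, Nat.card_congr e⟩
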